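/- Let γ : I → ℂ*, γ(s) = r(s)e^{iφ(s)}, be a closed smooth regular curve parameterized by arclength satisfying r' = cos(θ−φ) and θ' − φ' = (r/2 − n/r) sin(θ−φ), where θ is the angle of γ' with the x-axis (so that γ∗ψ defines a closed self-shrinker). Then ∫_γ ((1/2)r² − n) r^{n−1} e^{−r²/4} ds = 0 and ∫_γ (1/(2r²) − n/r⁴) r^{n−1} e^{−r²/4} ds = −∫_γ (4cos²(θ−φ)/r⁴) r^{n−1} e^{−r²/4} ds. -/

import Mathlib

open Real

noncomputable section

/-- Proposition 4.3 of Lee–Lue.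
Let `γ : I → ℂ*`, `γ(s) = r(s)e^{iφ(s)}`, be a closed smooth regular curve
parameterized by arclength (so that `γ'(s) = e^{iθ(s)}`, where `θ` is the angle
of the tangent with the `x`-axis), of period `L`, satisfying the self-shrinker
ODE system `r' = cos(θ-φ)`, `θ' - φ' = (r/2 - n/r) sin(θ-φ)` (so that for any
minimal Legendrian `ψ : M^{n-1} → S^{2n-1}`, `γ∗ψ` defines a closed
self-shrinker in `ℂ^n`).  Then
`∫_γ ((1/2)r² - n) r^{n-1} e^{-r²/4} ds = 0` and
`∫_γ (1/(2r²) - n/r⁴) r^{n-1} e^{-r²/4} ds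
   = -∫_γ (4cos²(θ-φ)/r⁴) r^{n-1} e^{-r²/4} ds`. -/
theorem closed_shrinker_curve_integral_identities
    (n : ℕ) (hn : 2 ≤ n)
    (γ : ℝ → ℂ) (r θ φ : ℝ → ℝ) (L : ℝ) (hL : 0 < L)
    -- `γ = r e^{iφ}` does not pass through the origin:
    (hpolar : ∀ s, γ s = (r s : ℂ) * Complex.exp ((φ s : ℂ) * Complex.I))
    (hrpos : ∀ s, 0 < r s)
    -- `γ` is parameterized by arclength, with tangent angle `θ`:
    (harc : ∀ s, HasDerivAt γ (Complex.exp ((θ s : ℂ) * Complex.I)) s)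
    -- `γ` is a closed curve of period `L`:
    (hper : Function.Periodic γ L)
    (hper' : Function.Periodic (fun s => Complex.exp ((θ s : ℂ) * Complex.I)) L)
    -- the self-shrinker ODE system:
    (hODE₁ : ∀ s, HasDerivAt r (Real.cos (θ s - φ s)) s)
    (hODE₂ : ∀ s, HasDerivAt (fun u => θ u - φ u)
      ((r s / 2 - n / r s) * Real.sin (θ s - φ s)) s) :
    (∫ s in (0:ℝ)..L,
        ((1/2) * r s ^ 2 - n) * r s ^ (n - 1) * Real.exp (-(r s ^ 2) / 4)) = 0 ∧
    (∫ s in (0:ℝ)..L,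
        (1 / (2 * r s ^ 2) - n / r s ^ 4) * r s ^ (n - 1) * Real.exp (-(r s ^ 2) / 4))
      = -∫ s in (0:ℝ)..L,
          (4 * Real.cos (θ s - φ s) ^ 2 / r s ^ 4) * r s ^ (n - 1)
            * Real.exp (-(r s ^ 2) / 4) := by
  have hrne : ∀ s, r s ≠ 0 := fun s => (hrpos s).ne'
  -- continuity facts
  have hr_cont : Continuous r := by
    rw [continuous_iff_continuousAt]; exact fun s => (hODE₁ s).continuousAt
  have hx_cont : Continuous fun s => θ s - φ s := by
    rw [continuous_iff_continuousAt]; exact fun s => (hODE₂ s).continuousAt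
  have hc_cont : Continuous fun s => Real.cos (θ s - φ s) := Real.continuous_cos.comp hx_cont
  have hE_cont : Continuous fun s => Real.exp (-(r s ^ 2) / 4) :=
    Real.continuous_exp.comp (((hr_cont.pow 2).neg).div_const 4)
  -- |γ| = r
  have habs : ∀ s, ‖γ s‖ = r s := by
    intro s
    rw [hpolar s, norm_mul, Complex.norm_real, Real.norm_eq_abs, Complex.norm_exp_ofReal_mul_I,
      mul_one, abs_of_pos (hrpos s)]
  have hrL : r L = r 0 := by
    have h := hper 0
    rw [zero_add] at h
    rw [← habs L, ← habs 0, h]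
  have hcos : ∀ s, Real.cos (θ s - φ s) * r s
      = (Complex.exp ((θ s : ℂ) * Complex.I) * (starRingEnd ℂ) (γ s)).re := by
    intro s
    have key : Complex.exp ((θ s : ℂ) * Complex.I) * (starRingEnd ℂ) (γ s)
        = (r s : ℂ) * Complex.exp (((θ s - φ s : ℝ) : ℂ) * Complex.I) := by
      rw [hpolar s, map_mul, Complex.conj_ofReal, ← Complex.exp_conj, map_mul,
        Complex.conj_ofReal, Complex.conj_I, mul_left_comm, ← Complex.exp_add]
      push_cast
      congr 1
      ring
    rw [key]
    simp only [Complex.mul_re, Complex.ofReal_re, Complex.ofReal_im,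
      Complex.exp_ofReal_mul_I_re]
    ring
  have hcL : Real.cos (θ L - φ L) = Real.cos (θ 0 - φ 0) := by
    have h1 := hcos L
    have h2 := hcos 0
    have hp := hper 0
    have hp' := hper' 0
    rw [zero_add] at hp
    simp only [zero_add] at hp'
    rw [hrL, hp', hp, ← h2] at h1
    exact mul_right_cancel₀ (hrne 0) h1
  -- the key derivative computation
  have hF : ∀ (k : ℤ) (s : ℝ),
      HasDerivAt (fun u => Real.cos (θ u - φ u) * r u ^ k * Real.exp (-(r u ^ 2) / 4))
        (-((r s ^ 2 / 2 - n) + ((n : ℝ) - k) * Real.cos (θ s - φ s) ^ 2)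
          * r s ^ (k - 1) * Real.exp (-(r s ^ 2) / 4)) s := by
    intro k s
    have hs2 : Real.sin (θ s - φ s) ^ 2 = 1 - Real.cos (θ s - φ s) ^ 2 := by
      have h := Real.sin_sq_add_cos_sq (θ s - φ s); linarith
    have h1 : HasDerivAt (fun u => Real.cos (θ u - φ u))
        (-(r s / 2 - n / r s) * (1 - Real.cos (θ s - φ s) ^ 2)) s := by
      have := (hODE₂ s).cos
      convert this using 1
      rw [← hs2]; ring
    have h2 : HasDerivAt (fun u => r u ^ k)
        ((k : ℝ) * r s ^ (k - 1) * Real.cos (θ s - φ s)) s := by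
      have := (hasDerivAt_zpow k (r s) (Or.inl (hrne s))).comp s (hODE₁ s)
      exact this
    have h3 : HasDerivAt (fun u => Real.exp (-(r u ^ 2) / 4))
        (Real.exp (-(r s ^ 2) / 4) * (-((2 : ℕ) * r s ^ (2 - 1) * Real.cos (θ s - φ s)) / 4)) s :=
      ((((hODE₁ s).pow 2).neg).div_const 4).exp
    have hD := (h1.mul h2).mul h3
    refine HasDerivAt.congr_deriv hD ?_
    simp only [Pi.mul_apply]
    have hk : r s ^ k = r s ^ (k - 1) * r s := by
      rw [zpow_sub_one₀ (hrne s), mul_assoc, inv_mul_cancel₀ (hrne s), mul_one]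
    rw [hk]
    have h0 := hrne s
    field_simp
    ring
  have hFTC : ∀ k : ℤ, (∫ s in (0:ℝ)..L,
      -((r s ^ 2 / 2 - n) + ((n : ℝ) - k) * Real.cos (θ s - φ s) ^ 2)
        * r s ^ (k - 1) * Real.exp (-(r s ^ 2) / 4)) = 0 := by
    intro k
    have hcont : Continuous fun s =>
        -((r s ^ 2 / 2 - n) + ((n : ℝ) - k) * Real.cos (θ s - φ s) ^ 2)
          * r s ^ (k - 1) * Real.exp (-(r s ^ 2) / 4) := by
      exact (((((hr_cont.pow 2).div_const 2).sub continuous_const).add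
        (continuous_const.mul (hc_cont.pow 2))).neg.mul
        (hr_cont.zpow₀ (k - 1) (fun s => Or.inl (hrne s)))).mul hE_cont
    rw [intervalIntegral.integral_eq_sub_of_hasDerivAt (fun s _ => hF k s)
      (hcont.intervalIntegrable 0 L)]
    rw [hrL, hcL]
    ring
  have hFTC' : ∀ k : ℤ, (∫ s in (0:ℝ)..L,
      ((r s ^ 2 / 2 - n) + ((n : ℝ) - k) * Real.cos (θ s - φ s) ^ 2)
        * r s ^ (k - 1) * Real.exp (-(r s ^ 2) / 4)) = 0 := by
    intro k
    have h := hFTC k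
    have heq : (∫ s in (0:ℝ)..L,
        ((r s ^ 2 / 2 - n) + ((n : ℝ) - k) * Real.cos (θ s - φ s) ^ 2)
          * r s ^ (k - 1) * Real.exp (-(r s ^ 2) / 4))
        = -∫ s in (0:ℝ)..L,
          -((r s ^ 2 / 2 - n) + ((n : ℝ) - k) * Real.cos (θ s - φ s) ^ 2)
            * r s ^ (k - 1) * Real.exp (-(r s ^ 2) / 4) := by
      rw [← intervalIntegral.integral_neg]
      apply intervalIntegral.integral_congr
      intro s _
      simp only []
      ring_nf
    rw [heq, h, neg_zero]
  constructor
  · have h := hFTC' n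
    have heq : (∫ s in (0:ℝ)..L,
        ((1/2) * r s ^ 2 - n) * r s ^ (n - 1) * Real.exp (-(r s ^ 2) / 4))
        = ∫ s in (0:ℝ)..L,
          ((r s ^ 2 / 2 - n) + ((n : ℝ) - ((n : ℤ) : ℝ)) * Real.cos (θ s - φ s) ^ 2)
            * r s ^ ((n : ℤ) - 1) * Real.exp (-(r s ^ 2) / 4) := by
      apply intervalIntegral.integral_congr
      intro s _
      have hpow : r s ^ ((n : ℤ) - 1) = r s ^ (n - 1 : ℕ) := by
        rw [show (n : ℤ) - 1 = ((n - 1 : ℕ) : ℤ) by omega, zpow_natCast]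
      simp only [hpow]
      push_cast
      ring
    rw [heq]
    exact h
  · have h := hFTC' ((n : ℤ) - 4)
    have hA : Continuous fun s =>
        (1 / (2 * r s ^ 2) - n / r s ^ 4) * r s ^ (n - 1) * Real.exp (-(r s ^ 2) / 4) := by
      exact (((continuous_const.div (continuous_const.mul (hr_cont.pow 2))
        (fun s => mul_ne_zero two_ne_zero (pow_ne_zero 2 (hrne s)))).sub
        (continuous_const.div (hr_cont.pow 4)
        (fun s => pow_ne_zero 4 (hrne s)))).mul (hr_cont.pow _)).mul hE_cont
    have hB : Continuous fun s =>
        (4 * Real.cos (θ s - φ s) ^ 2 / r s ^ 4) * r s ^ (n - 1)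
          * Real.exp (-(r s ^ 2) / 4) := by
      exact (((continuous_const.mul (hc_cont.pow 2)).div (hr_cont.pow 4)
        (fun s => pow_ne_zero 4 (hrne s))).mul (hr_cont.pow _)).mul hE_cont
    have hsum : (∫ s in (0:ℝ)..L,
        ((1 / (2 * r s ^ 2) - n / r s ^ 4) * r s ^ (n - 1) * Real.exp (-(r s ^ 2) / 4)
          + (4 * Real.cos (θ s - φ s) ^ 2 / r s ^ 4) * r s ^ (n - 1)
            * Real.exp (-(r s ^ 2) / 4))) = 0 := by
      have heq : (∫ s in (0:ℝ)..L,
          ((1 / (2 * r s ^ 2) - n / r s ^ 4) * r s ^ (n - 1) * Real.exp (-(r s ^ 2) / 4)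
            + (4 * Real.cos (θ s - φ s) ^ 2 / r s ^ 4) * r s ^ (n - 1)
              * Real.exp (-(r s ^ 2) / 4)))
          = ∫ s in (0:ℝ)..L,
            ((r s ^ 2 / 2 - n) + ((n : ℝ) - (((n : ℤ) - 4 : ℤ) : ℝ)) * Real.cos (θ s - φ s) ^ 2)
              * r s ^ ((n : ℤ) - 4 - 1) * Real.exp (-(r s ^ 2) / 4) := by
        apply intervalIntegral.integral_congr
        intro s _
        have hpow : r s ^ ((n : ℤ) - 4 - 1) = r s ^ (n - 1 : ℕ) / r s ^ (4 : ℕ) := by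
          rw [show (n : ℤ) - 4 - 1 = ((n - 1 : ℕ) : ℤ) - ((4 : ℕ) : ℤ) by omega,
            zpow_sub₀ (hrne s), zpow_natCast, zpow_natCast]
        simp only [hpow]
        have h0 := hrne s
        push_cast
        field_simp
        ring
      rw [heq]
      exact h
    rw [intervalIntegral.integral_add (hA.intervalIntegrable 0 L)
      (hB.intervalIntegrable 0 L)] at hsum
    linarith
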